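/- Every finite nonempty subset V of ℤ² all of whose connected components (under nearest-neighbor adjacency) have size at least 2 can be partitioned into tiles, each tile being isometric (under lattice symmetries) to one of: a domino (2 collinear adjacent sites), a straight tromino (3 collinear adjacent sites), an L-tromino (3 sites forming a corner), a T-tetromino (a site with 3 of its neighbors), or a plus-pentomino (a site with all 4 of its neighbors). -/
import Mathlib


/-- The eight lattice symmetries of `ℤ²` fixing the origin. -/
def latticeSym (σ : Fin 8) (p : ℤ × ℤ) : ℤ × ℤ :=
  match σ with
  | 0 => (p.1, p.2)
  | 1 => (-p.1, p.2)
  | 2 => (p.1, -p.2)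
  | 3 => (-p.1, -p.2)
  | 4 => (p.2, p.1)
  | 5 => (-p.2, p.1)
  | 6 => (p.2, -p.1)
  | 7 => (-p.2, -p.1)

/-- The five base shapes: domino, straight tromino, L-tromino, T-tetromino,
plus-pentomino. -/
def baseShape : Fin 5 → Finset (ℤ × ℤ)
  | 0 => {(0, 0), (1, 0)}
  | 1 => {(0, 0), (1, 0), (2, 0)}
  | 2 => {(0, 0), (1, 0), (0, 1)}
  | 3 => {(0, 0), (1, 0), (-1, 0), (0, 1)}
  | 4 => {(0, 0), (1, 0), (-1, 0), (0, 1), (0, -1)}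

/-- A tile is the image of one of the five base shapes under a lattice symmetry
followed by a translation. -/
def IsTile (T : Finset (ℤ × ℤ)) : Prop :=
  ∃ (i : Fin 5) (σ : Fin 8) (t : ℤ × ℤ),
    T = (baseShape i).image (fun p => t + latticeSym σ p)

lemma adj_cases {x y : ℤ × ℤ} (h : |x.1 - y.1| + |x.2 - y.2| = 1) :
    y = (x.1 + 1, x.2) ∨ y = (x.1 - 1, x.2) ∨ y = (x.1, x.2 + 1) ∨ y = (x.1, x.2 - 1) := by
  obtain ⟨x1, x2⟩ := x; obtain ⟨y1, y2⟩ := y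
  simp only [Prod.mk.injEq]
  rcases abs_cases (x1 - y1) with ⟨e1, _⟩ | ⟨e1, _⟩ <;>
    rcases abs_cases (x2 - y2) with ⟨e2, _⟩ | ⟨e2, _⟩ <;>
    rw [e1, e2] at h <;> omega

lemma adj_symm {x y : ℤ × ℤ} (h : |x.1 - y.1| + |x.2 - y.2| = 1) :
    |y.1 - x.1| + |y.2 - x.2| = 1 := by
  rw [abs_sub_comm y.1 x.1, abs_sub_comm y.2 x.2]; exact h

lemma sum_pm {x y : ℤ × ℤ} (h : |x.1 - y.1| + |x.2 - y.2| = 1) :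
    x.1 - y.1 + (x.2 - y.2) = 1 ∨ x.1 - y.1 + (x.2 - y.2) = -1 := by
  obtain ⟨x1, x2⟩ := x; obtain ⟨y1, y2⟩ := y
  simp only at h ⊢
  rcases abs_cases (x1 - y1) with ⟨e1, _⟩ | ⟨e1, _⟩ <;>
    rcases abs_cases (x2 - y2) with ⟨e2, _⟩ | ⟨e2, _⟩ <;> omega

lemma no_common {a b c : ℤ × ℤ} (hab : |a.1 - b.1| + |a.2 - b.2| = 1)
    (hca : |c.1 - a.1| + |c.2 - a.2| = 1) (hcb : |c.1 - b.1| + |c.2 - b.2| = 1) : False := by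
  have h1 := sum_pm hab
  have h2 := sum_pm hca
  have h3 := sum_pm hcb
  obtain ⟨a1, a2⟩ := a; obtain ⟨b1, b2⟩ := b; obtain ⟨c1, c2⟩ := c
  simp only at h1 h2 h3
  omega

set_option maxHeartbeats 3200000 in
lemma isTile_star (u : ℤ × ℤ) (S : Finset (ℤ × ℤ)) (hne : S.Nonempty)
    (hsub : ∀ w ∈ S, w = (u.1 + 1, u.2) ∨ w = (u.1 - 1, u.2) ∨ w = (u.1, u.2 + 1) ∨
      w = (u.1, u.2 - 1)) :
    IsTile (insert u S) := by
  classical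
  have hSeq : S = ({(u.1 + 1, u.2), (u.1 - 1, u.2), (u.1, u.2 + 1), (u.1, u.2 - 1)} :
      Finset (ℤ × ℤ)).filter (· ∈ S) := by
    ext w
    simp only [Finset.mem_filter, Finset.mem_insert, Finset.mem_singleton]
    exact ⟨fun hw => ⟨hsub w hw, hw⟩, fun h => h.2⟩
  by_cases hE : (u.1 + 1, u.2) ∈ S <;> by_cases hW : (u.1 - 1, u.2) ∈ S <;>
    by_cases hN : (u.1, u.2 + 1) ∈ S <;> by_cases hS : (u.1, u.2 - 1) ∈ S
  · -- E W N S
    rw [hSeq]; refine ⟨4, 0, u, ?_⟩; ext ⟨a, b⟩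
    simp [Finset.filter_insert, Finset.filter_singleton, hE, hW, hN, hS, baseShape, latticeSym,
      Prod.ext_iff]
    all_goals omega
  · -- E W N
    rw [hSeq]; refine ⟨3, 0, u, ?_⟩; ext ⟨a, b⟩
    simp [Finset.filter_insert, Finset.filter_singleton, hE, hW, hN, hS, baseShape, latticeSym,
      Prod.ext_iff]
    all_goals omega
  · -- E W S
    rw [hSeq]; refine ⟨3, 2, u, ?_⟩; ext ⟨a, b⟩
    simp [Finset.filter_insert, Finset.filter_singleton, hE, hW, hN, hS, baseShape, latticeSym,
      Prod.ext_iff]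
    all_goals omega
  · -- E W
    rw [hSeq]; refine ⟨1, 0, (u.1 - 1, u.2), ?_⟩; ext ⟨a, b⟩
    simp [Finset.filter_insert, Finset.filter_singleton, hE, hW, hN, hS, baseShape, latticeSym,
      Prod.ext_iff]
    all_goals omega
  · -- E N S
    rw [hSeq]; refine ⟨3, 4, u, ?_⟩; ext ⟨a, b⟩
    simp [Finset.filter_insert, Finset.filter_singleton, hE, hW, hN, hS, baseShape, latticeSym,
      Prod.ext_iff]
    all_goals omega
  · -- E N
    rw [hSeq]; refine ⟨2, 0, u, ?_⟩; ext ⟨a, b⟩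
    simp [Finset.filter_insert, Finset.filter_singleton, hE, hW, hN, hS, baseShape, latticeSym,
      Prod.ext_iff]
    all_goals omega
  · -- E S
    rw [hSeq]; refine ⟨2, 2, u, ?_⟩; ext ⟨a, b⟩
    simp [Finset.filter_insert, Finset.filter_singleton, hE, hW, hN, hS, baseShape, latticeSym,
      Prod.ext_iff]
    all_goals omega
  · -- E
    rw [hSeq]; refine ⟨0, 0, u, ?_⟩; ext ⟨a, b⟩
    simp [Finset.filter_insert, Finset.filter_singleton, hE, hW, hN, hS, baseShape, latticeSym,
      Prod.ext_iff]
    all_goals omega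
  · -- W N S
    rw [hSeq]; refine ⟨3, 5, u, ?_⟩; ext ⟨a, b⟩
    simp [Finset.filter_insert, Finset.filter_singleton, hE, hW, hN, hS, baseShape, latticeSym,
      Prod.ext_iff]
    all_goals omega
  · -- W N
    rw [hSeq]; refine ⟨2, 1, u, ?_⟩; ext ⟨a, b⟩
    simp [Finset.filter_insert, Finset.filter_singleton, hE, hW, hN, hS, baseShape, latticeSym,
      Prod.ext_iff]
    all_goals omega
  · -- W S
    rw [hSeq]; refine ⟨2, 3, u, ?_⟩; ext ⟨a, b⟩
    simp [Finset.filter_insert, Finset.filter_singleton, hE, hW, hN, hS, baseShape, latticeSym,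
      Prod.ext_iff]
    all_goals omega
  · -- W
    rw [hSeq]; refine ⟨0, 1, u, ?_⟩; ext ⟨a, b⟩
    simp [Finset.filter_insert, Finset.filter_singleton, hE, hW, hN, hS, baseShape, latticeSym,
      Prod.ext_iff]
    all_goals omega
  · -- N S
    rw [hSeq]; refine ⟨1, 4, (u.1, u.2 - 1), ?_⟩; ext ⟨a, b⟩
    simp [Finset.filter_insert, Finset.filter_singleton, hE, hW, hN, hS, baseShape, latticeSym,
      Prod.ext_iff]
    all_goals omega
  · -- N
    rw [hSeq]; refine ⟨0, 4, u, ?_⟩; ext ⟨a, b⟩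
    simp [Finset.filter_insert, Finset.filter_singleton, hE, hW, hN, hS, baseShape, latticeSym,
      Prod.ext_iff]
    all_goals omega
  · -- S
    rw [hSeq]; refine ⟨0, 6, u, ?_⟩; ext ⟨a, b⟩
    simp [Finset.filter_insert, Finset.filter_singleton, hE, hW, hN, hS, baseShape, latticeSym,
      Prod.ext_iff]
    all_goals omega
  · -- none : contradiction
    exfalso
    obtain ⟨w, hw⟩ := hne
    rcases hsub w hw with rfl | rfl | rfl | rfl
    · exact hE hw
    · exact hW hw
    · exact hN hw
    · exact hS hw

set_option maxHeartbeats 1600000 in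
lemma exists_tile (V : Finset (ℤ × ℤ)) (hne : V.Nonempty)
    (hg : ∀ x ∈ V, ∃ y ∈ V, |x.1 - y.1| + |x.2 - y.2| = 1) :
    ∃ T : Finset (ℤ × ℤ), IsTile T ∧ T ⊆ V ∧ T.Nonempty ∧
      ∀ x ∈ V \ T, ∃ y ∈ V \ T, |x.1 - y.1| + |x.2 - y.2| = 1 := by
  classical
  by_cases hA : ∃ c ∈ V, ∃ u ∈ V, (|c.1 - u.1| + |c.2 - u.2| = 1 ∧
      ∀ z ∈ V, |c.1 - z.1| + |c.2 - z.2| = 1 → z = u)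
  · obtain ⟨c, hcV, u, huV, hcu, hconly⟩ := hA
    set C := V.filter (fun w => |w.1 - u.1| + |w.2 - u.2| = 1 ∧
      ∀ z ∈ V, |w.1 - z.1| + |w.2 - z.2| = 1 → z = u) with hCdef
    have hcC : c ∈ C := Finset.mem_filter.mpr ⟨hcV, hcu, hconly⟩
    refine ⟨insert u C, ?_, ?_, ⟨u, Finset.mem_insert_self _ _⟩, ?_⟩
    · refine isTile_star u C ⟨c, hcC⟩ ?_
      intro w hw
      exact adj_cases (adj_symm (Finset.mem_filter.mp hw).2.1)
    · exact Finset.insert_subset huV (Finset.filter_subset _ _)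
    · intro x hx
      obtain ⟨hxV, hxT⟩ := Finset.mem_sdiff.mp hx
      obtain ⟨y, hyV, hxy⟩ := hg x hxV
      by_cases hyT : y ∈ insert u C
      · rcases Finset.mem_insert.mp hyT with rfl | hyC
        · by_cases hall : ∀ z ∈ V, |x.1 - z.1| + |x.2 - z.2| = 1 → z = y
          · exact absurd (Finset.mem_insert.mpr
              (Or.inr (Finset.mem_filter.mpr ⟨hxV, hxy, hall⟩))) hxT
          · push_neg at hall
            obtain ⟨z, hzV, hxz, hzu⟩ := hall
            refine ⟨z, Finset.mem_sdiff.mpr ⟨hzV, ?_⟩, hxz⟩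
            intro hzT
            rcases Finset.mem_insert.mp hzT with rfl | hzC
            · exact hzu rfl
            · have hxu := (Finset.mem_filter.mp hzC).2.2 x hxV (adj_symm hxz)
              subst hxu
              exact hxT (Finset.mem_insert_self _ _)
        · have hxu := (Finset.mem_filter.mp hyC).2.2 x hxV (adj_symm hxy)
          subst hxu
          exact absurd (Finset.mem_insert_self _ _) hxT
      · exact ⟨y, Finset.mem_sdiff.mpr ⟨hyV, hyT⟩, hxy⟩
  · push_neg at hA
    obtain ⟨p, hpV, hp1, hp2⟩ : ∃ p ∈ V, (∀ q ∈ V, q.1 ≤ p.1) ∧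
        (∀ q ∈ V, q.1 = p.1 → q.2 ≤ p.2) := by
      have h1 : (V.image Prod.fst).Nonempty := hne.image _
      obtain ⟨r, hrV, hr1⟩ := Finset.mem_image.mp ((V.image Prod.fst).max'_mem h1)
      have hWne : (V.filter (fun q => q.1 = (V.image Prod.fst).max' h1)).Nonempty :=
        ⟨r, Finset.mem_filter.mpr ⟨hrV, hr1⟩⟩
      have h2 : ((V.filter (fun q => q.1 = (V.image Prod.fst).max' h1)).image Prod.snd).Nonempty :=
        hWne.image _
      obtain ⟨p, hpW, hp2'⟩ := Finset.mem_image.mp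
        (((V.filter (fun q => q.1 = (V.image Prod.fst).max' h1)).image Prod.snd).max'_mem h2)
      have hpV : p ∈ V := (Finset.mem_filter.mp hpW).1
      have hpm : p.1 = (V.image Prod.fst).max' h1 := (Finset.mem_filter.mp hpW).2
      refine ⟨p, hpV, ?_, ?_⟩
      · intro q hq
        rw [hpm]
        exact Finset.le_max' _ _ (Finset.mem_image_of_mem _ hq)
      · intro q hq hq1
        rw [hp2']
        exact Finset.le_max' _ _ (Finset.mem_image_of_mem _
          (Finset.mem_filter.mpr ⟨hq, by rw [hq1, hpm]⟩))
    obtain ⟨u, huV, hpu⟩ := hg p hpV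
    obtain ⟨z, hzV, hpz, hzu⟩ := hA p hpV u huV hpu
    have hdir : ∀ w ∈ V, |p.1 - w.1| + |p.2 - w.2| = 1 →
        w = (p.1 - 1, p.2) ∨ w = (p.1, p.2 - 1) := by
      intro w hwV hw
      rcases adj_cases hw with rfl | rfl | rfl | rfl
      · exfalso; have h := hp1 _ hwV; simp at h
      · exact Or.inl rfl
      · exfalso; have h := hp2 _ hwV rfl; simp at h
      · exact Or.inr rfl
    have hu' := hdir u huV hpu
    have hz' := hdir z hzV hpz
    have hlV : (p.1 - 1, p.2) ∈ V := by
      rcases hu' with h | h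
      · rw [← h]; exact huV
      · rcases hz' with h2 | h2
        · rw [← h2]; exact hzV
        · exact absurd (h2.trans h.symm) hzu
    have hpl : |p.1 - (p.1 - 1)| + |p.2 - p.2| = 1 := by
      rw [show p.1 - (p.1 - 1) = (1 : ℤ) from by ring, sub_self]
      norm_num
    refine ⟨{p, (p.1 - 1, p.2)}, ⟨0, 1, p, ?_⟩, ?_, ⟨p, Finset.mem_insert_self _ _⟩, ?_⟩
    · ext ⟨a, b⟩
      simp [baseShape, latticeSym, Prod.ext_iff]
      all_goals omega
    · exact Finset.insert_subset hpV (Finset.singleton_subset_iff.mpr hlV)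
    · intro x hx
      obtain ⟨hxV, hxT⟩ := Finset.mem_sdiff.mp hx
      obtain ⟨y, hyV, hxy⟩ := hg x hxV
      by_cases hyT : y ∈ ({p, (p.1 - 1, p.2)} : Finset (ℤ × ℤ))
      · obtain ⟨z', hz'V, hxz', hz'y⟩ := hA x hxV y hyV hxy
        by_cases hz'T : z' ∈ ({p, (p.1 - 1, p.2)} : Finset (ℤ × ℤ))
        · exfalso
          have hy' : y = p ∨ y = (p.1 - 1, p.2) := by simpa using hyT
          have hz'' : z' = p ∨ z' = (p.1 - 1, p.2) := by simpa using hz'T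
          rcases hy' with hy1 | hy1 <;> rcases hz'' with hz1 | hz1
          · exact hz'y (hz1.trans hy1.symm)
          · rw [hy1] at hxy; rw [hz1] at hxz'
            exact no_common (a := p) (b := (p.1 - 1, p.2)) (c := x) hpl hxy hxz'
          · rw [hy1] at hxy; rw [hz1] at hxz'
            exact no_common (a := p) (b := (p.1 - 1, p.2)) (c := x) hpl hxz' hxy
          · exact hz'y (hz1.trans hy1.symm)
        · exact ⟨z', Finset.mem_sdiff.mpr ⟨hz'V, hz'T⟩, hxz'⟩
      · exact ⟨y, Finset.mem_sdiff.mpr ⟨hyV, hyT⟩, hxy⟩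

lemma tiling_aux : ∀ n : ℕ, ∀ V : Finset (ℤ × ℤ), V.card ≤ n →
    (∀ x ∈ V, ∃ y ∈ V, |x.1 - y.1| + |x.2 - y.2| = 1) →
    ∃ 𝒯 : Finset (Finset (ℤ × ℤ)),
      (∀ T ∈ 𝒯, IsTile T) ∧
      (∀ T ∈ 𝒯, ∀ T' ∈ 𝒯, T ≠ T' → Disjoint T T') ∧
      𝒯.biUnion id = V := by
  intro n
  induction n with
  | zero =>
    intro V hc _
    have hV : V = ∅ := Finset.card_eq_zero.mp (Nat.le_zero.mp hc)
    subst hV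
    exact ⟨∅, by simp, by simp, by simp⟩
  | succ n ih =>
    intro V hc hg
    rcases V.eq_empty_or_nonempty with rfl | hne
    · exact ⟨∅, by simp, by simp, by simp⟩
    obtain ⟨T, hT, hTV, hTne, hgood⟩ := exists_tile V hne hg
    have hcard : (V \ T).card ≤ n := by
      have h1 : (V \ T).card < V.card :=
        Finset.card_lt_card (Finset.sdiff_ssubset hTV hTne)
      omega
    obtain ⟨𝒯', h1, h2, h3⟩ := ih (V \ T) hcard hgood
    refine ⟨insert T 𝒯', ?_, ?_, ?_⟩
    · intro A hA
      rcases Finset.mem_insert.mp hA with rfl | hA'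
      · exact hT
      · exact h1 A hA'
    · have hsub : ∀ X ∈ 𝒯', X ⊆ V \ T := by
        intro X hX
        rw [← h3]
        exact Finset.subset_biUnion_of_mem id hX
      intro A hA B hB hAB
      rcases Finset.mem_insert.mp hA with rfl | hA' <;>
        rcases Finset.mem_insert.mp hB with rfl | hB'
      · exact absurd rfl hAB
      · exact Finset.disjoint_left.mpr (fun a haA haB =>
          (Finset.mem_sdiff.mp (hsub B hB' haB)).2 haA)
      · exact Finset.disjoint_left.mpr (fun a haA haB =>
          (Finset.mem_sdiff.mp (hsub A hA' haA)).2 haB)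
      · exact h2 A hA' B hB' hAB
    · rw [Finset.biUnion_insert, h3]
      simp only [id]
      exact Finset.union_sdiff_of_subset hTV

theorem stmt_16 (V : Finset (ℤ × ℤ)) (hV : V.Nonempty)
    (hcomp : ∀ x ∈ V, ∃ y ∈ V, |x.1 - y.1| + |x.2 - y.2| = 1) :
    ∃ 𝒯 : Finset (Finset (ℤ × ℤ)),
      (∀ T ∈ 𝒯, IsTile T) ∧
      (∀ T ∈ 𝒯, ∀ T' ∈ 𝒯, T ≠ T' → Disjoint T T') ∧
      𝒯.biUnion id = V := by
  exact tiling_aux V.card V le_rfl hcomp
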